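/- Let m ≥ 1 and let ω : ℤ^m × ℤ^m → 𝕋 be a 2-cocycle with respect to the trivial action, i.e. ω(x,y)·ω(x+y,z) = ω(y,z)·ω(x,y+z) for all x,y,z ∈ ℤ^m. Then there exist a bicharacter b : ℤ^m × ℤ^m → 𝕋 with b(x,x) = 1 for all x, and a function e : ℤ^m → 𝕋, such that ω(x,y) = b(x,y)·e(x)·e(y)·e(x+y)^{−1} for all x,y ∈ ℤ^m. In other words, every 𝕋-valued 2-cocycle on ℤ^m is cohomologous to a skew-symmetric bicharacter. -/

import Mathlib

noncomputable def csqrt (z : Circle) : Circle := Circle.exp (Complex.arg z / 2)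

lemma csqrt_mul_self (z : Circle) : csqrt z * csqrt z = z := by
  rw [csqrt, ← Circle.exp_add, add_halves, Circle.exp_arg]

lemma pi_single_sum (m : ℕ) (x : Fin m → ℤ) :
    ∑ i, x i • (Pi.single i 1 : Fin m → ℤ) = x := by
  funext j
  rw [Finset.sum_apply]
  simp [Pi.single_apply]

lemma mulhom_pi_expand {m : ℕ} {G : Type*} [CommGroup G] (f : (Fin m → ℤ) → G)
    (hf : ∀ x x', f (x + x') = f x * f x') (x : Fin m → ℤ) :
    f x = ∏ i, f (Pi.single i 1) ^ (x i) := by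
  let F : Multiplicative (Fin m → ℤ) →* G :=
    MonoidHom.mk' (fun a => f a.toAdd) (fun a b => hf _ _)
  have h0 : f x = F (Multiplicative.ofAdd x) := rfl
  rw [h0]
  conv_lhs => rw [← pi_single_sum m x, ofAdd_sum, map_prod]
  refine Finset.prod_congr rfl fun i _ => ?_
  rw [ofAdd_zsmul, map_zpow]
  rfl

lemma prod_pairs {n : ℕ} {M : Type*} [CommMonoid M] (F : Fin n → Fin n → M)
    (hdiag : ∀ i, F i i = 1) :
    ∏ i, ∏ j, F i j = ∏ i, ∏ j ∈ Finset.Ioi i, (F i j * F j i) := by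
  have h1 : ∀ i : Fin n, (Finset.univ : Finset (Fin n)).erase i
      = Finset.Iio i ∪ Finset.Ioi i := by
    intro i; ext j
    simp only [Finset.mem_erase, Finset.mem_union, Finset.mem_Iio, Finset.mem_Ioi,
      Finset.mem_univ, and_true]
    exact ne_iff_lt_or_gt
  have h2 : ∀ i : Fin n, ∏ j, F i j
      = (∏ j ∈ Finset.Iio i, F i j) * ∏ j ∈ Finset.Ioi i, F i j := by
    intro i
    rw [← Finset.mul_prod_erase Finset.univ _ (Finset.mem_univ i), hdiag, one_mul, h1,
      Finset.prod_union]
    exact Finset.disjoint_left.2 fun a ha hb =>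
      absurd (Finset.mem_Ioi.1 hb) (not_lt.2 (le_of_lt (Finset.mem_Iio.1 ha)))
  calc ∏ i, ∏ j, F i j
      = ∏ i, ((∏ j ∈ Finset.Iio i, F i j) * ∏ j ∈ Finset.Ioi i, F i j) :=
        Finset.prod_congr rfl fun i _ => h2 i
    _ = (∏ i, ∏ j ∈ Finset.Iio i, F i j) * ∏ i, ∏ j ∈ Finset.Ioi i, F i j :=
        Finset.prod_mul_distrib
    _ = (∏ j, ∏ i ∈ Finset.Ioi j, F i j) * ∏ i, ∏ j ∈ Finset.Ioi i, F i j := by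
        rw [Finset.prod_comm' (t' := Finset.univ) (s' := fun y => Finset.Ioi y)
          (by intro x y; simp [Finset.mem_Iio, Finset.mem_Ioi])]
    _ = ∏ i, ∏ j ∈ Finset.Ioi i, (F i j * F j i) := by
        rw [← Finset.prod_mul_distrib]
        refine Finset.prod_congr rfl fun i _ => ?_
        rw [← Finset.prod_mul_distrib]
        exact Finset.prod_congr rfl fun j _ => mul_comm _ _

structure ExtC (m : ℕ) : Type where
  t : Circle
  v : Fin m → ℤ

noncomputable def extMul {m : ℕ} (σ : (Fin m → ℤ) → (Fin m → ℤ) → Circle) (a b : ExtC m) : ExtC m :=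
  ⟨a.t * b.t * σ a.v b.v, a.v + b.v⟩

noncomputable def extCommGroup {m : ℕ} (σ : (Fin m → ℤ) → (Fin m → ℤ) → Circle)
    (hcoc : ∀ x y z, σ x y * σ (x + y) z = σ y z * σ x (y + z))
    (hsym : ∀ x y, σ x y = σ y x)
    (h0 : ∀ y, σ 0 y = 1) : CommGroup (ExtC m) where
  mul := extMul σ
  one := ⟨1, 0⟩
  inv a := ⟨(a.t * σ a.v (-a.v))⁻¹, -a.v⟩
  mul_assoc a b c := by
    show extMul σ (extMul σ a b) c = extMul σ a (extMul σ b c)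
    unfold extMul
    dsimp only
    refine congrArg₂ ExtC.mk ?_ (add_assoc _ _ _)
    have h := congrArg (fun z : Circle => (z : ℂ)) (hcoc a.v b.v c.v)
    push_cast at h
    ext
    push_cast
    linear_combination (↑a.t * ↑b.t * ↑c.t : ℂ) * h
  one_mul a := by
    show extMul σ ⟨1, 0⟩ a = a
    unfold extMul
    cases a with
    | mk t v => simp [h0]
  mul_one a := by
    show extMul σ a ⟨1, 0⟩ = a
    unfold extMul
    cases a with
    | mk t v =>
      simp only
      rw [hsym v 0, h0]
      simp
  inv_mul_cancel a := by
    show extMul σ ⟨(a.t * σ a.v (-a.v))⁻¹, -a.v⟩ a = ⟨1, 0⟩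
    unfold extMul
    dsimp only
    refine congrArg₂ ExtC.mk ?_ (neg_add_cancel _)
    rw [hsym (-a.v) a.v]
    ext
    push_cast
    field_simp
  mul_comm a b := by
    show extMul σ a b = extMul σ b a
    unfold extMul
    refine congrArg₂ ExtC.mk ?_ (add_comm _ _)
    rw [hsym a.v b.v, mul_comm a.t b.t]

lemma pi_single_sum' (m : ℕ) (x : Fin m → ℤ) :
    ∑ i, x i • (Pi.single i 1 : Fin m → ℤ) = x := by
  funext j
  rw [Finset.sum_apply]
  simp [Pi.single_apply]

lemma sym_cocycle_coboundary (m : ℕ) (σ : (Fin m → ℤ) → (Fin m → ℤ) → Circle)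
    (hcoc : ∀ x y z, σ x y * σ (x + y) z = σ y z * σ x (y + z))
    (hsym : ∀ x y, σ x y = σ y x) (h0 : ∀ y, σ 0 y = 1) :
    ∃ e : (Fin m → ℤ) → Circle, ∀ x y, σ x y = e x * e y * (e (x + y))⁻¹ := by
  letI : CommGroup (ExtC m) := extCommGroup σ hcoc hsym h0
  have hmul : ∀ a b : ExtC m, a * b = extMul σ a b := fun _ _ => rfl
  set φ : (Fin m → ℤ) → ExtC m :=
    fun x => ∏ i, (ExtC.mk 1 (Pi.single i 1)) ^ (x i) with hφ
  let vhom : ExtC m →* Multiplicative (Fin m → ℤ) :=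
    MonoidHom.mk' (fun a => Multiplicative.ofAdd a.v) (fun a b => rfl)
  have hv : ∀ x, (φ x).v = x := by
    intro x
    have h : vhom (φ x) = Multiplicative.ofAdd x := by
      rw [hφ]
      dsimp only
      rw [map_prod]
      conv_rhs => rw [← pi_single_sum' m x, ofAdd_sum]
      refine Finset.prod_congr rfl fun i _ => ?_
      rw [map_zpow, ofAdd_zsmul]
      rfl
    exact Multiplicative.ofAdd.injective h
  have hadd : ∀ x y, φ (x + y) = φ x * φ y := by
    intro x y
    rw [hφ]
    dsimp only
    rw [← Finset.prod_mul_distrib]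
    refine Finset.prod_congr rfl fun i _ => ?_
    rw [Pi.add_apply, zpow_add]
  refine ⟨fun x => ((φ x).t)⁻¹, fun x y => ?_⟩
  have h1 := hadd x y
  rw [hmul] at h1
  have ht : (φ (x + y)).t = (φ x).t * (φ y).t * σ x y := by
    rw [h1]
    unfold extMul
    rw [hv, hv]
  have hc := congrArg (fun z : Circle => (z : ℂ)) ht
  push_cast at hc
  ext
  push_cast
  field_simp
  linear_combination -hc

/-- Every `𝕋`-valued 2-cocycle on `ℤ^m` (with trivial action) is cohomologous to a
skew-symmetric bicharacter. -/
theorem stmt4 (m : ℕ) (hm : 1 ≤ m) (ω : (Fin m → ℤ) → (Fin m → ℤ) → Circle)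
    (hcoc : ∀ x y z, ω x y * ω (x + y) z = ω y z * ω x (y + z)) :
    ∃ (b : (Fin m → ℤ) → (Fin m → ℤ) → Circle) (e : (Fin m → ℤ) → Circle),
      (∀ x x' y, b (x + x') y = b x y * b x' y) ∧
      (∀ x y y', b x (y + y') = b x y * b x y') ∧
      (∀ x, b x x = 1) ∧
      (∀ x y, ω x y = b x y * e x * e y * (e (x + y))⁻¹) := by
  classical
  have hω0 : ∀ y, ω 0 y = ω 0 0 := by
    intro y
    have h := hcoc 0 0 y
    rw [add_zero, zero_add] at h
    rw [mul_comm (ω 0 0) (ω 0 y)] at h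
    exact (mul_left_cancel h).symm
  have hω0' : ∀ x, ω x 0 = ω 0 0 := by
    intro x
    have h := hcoc x 0 0
    rw [add_zero, add_zero] at h
    exact mul_right_cancel h
  have key : ∀ x x' y, ω (x + x') y * ω y x * ω y x'
      = ω y (x + x') * ω x y * ω x' y := by
    intro x x' y
    have h1 := hcoc x x' y
    rw [add_comm x' y] at h1
    have h2 := hcoc x y x'
    have h3 := hcoc y x x'
    rw [add_comm y x] at h3
    have c1 := congrArg (fun z : Circle => (z : ℂ)) h1
    have c2 := congrArg (fun z : Circle => (z : ℂ)) h2
    have c3 := congrArg (fun z : Circle => (z : ℂ)) h3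
    push_cast at c1 c2 c3
    ext
    push_cast
    refine mul_left_cancel₀ (mul_ne_zero (Circle.coe_ne_zero (ω x x'))
      (Circle.coe_ne_zero (ω (x + y) x'))) ?_
    linear_combination ((ω y x : ℂ) * (ω y x' : ℂ) * (ω (x + y) x' : ℂ)) * c1
      - ((ω x' y : ℂ) * (ω y x : ℂ) * (ω (x + y) x' : ℂ)) * c2
      + ((ω x' y : ℂ) * (ω x y : ℂ) * (ω (x + y) x' : ℂ)) * c3
  set β : (Fin m → ℤ) → (Fin m → ℤ) → Circle := fun x y => ω x y * (ω y x)⁻¹ with hβ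
  have hβ1 : ∀ x x' y, β (x + x') y = β x y * β x' y := by
    intro x x' y
    have hk := congrArg (fun z : Circle => (z : ℂ)) (key x x' y)
    push_cast at hk
    simp only [hβ]
    ext
    push_cast
    field_simp
    linear_combination hk
  have hβskew : ∀ x y, β y x = (β x y)⁻¹ := by
    intro x y
    simp only [hβ]
    ext
    push_cast
    field_simp
  have hβdiag : ∀ x, β x x = 1 := by
    intro x
    simp only [hβ]
    exact mul_inv_cancel _
  have hβ2 : ∀ x y y', β x (y + y') = β x y * β x y' := by
    intro x y y'
    rw [hβskew (y + y') x, hβ1 y y' x, mul_inv, hβskew x y, hβskew x y', inv_inv, inv_inv]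
  have hexpand : ∀ x y, β x y = ∏ i, ∏ j ∈ Finset.Ioi i,
      (β (Pi.single i 1) (Pi.single j 1)) ^ (x i * y j - x j * y i) := by
    intro x y
    have e1 : β x y = ∏ i, (β (Pi.single i 1) y) ^ (x i) :=
      mulhom_pi_expand (fun x => β x y) (fun a b => hβ1 a b y) x
    have e4 : (∏ i, (β (Pi.single i 1) y) ^ (x i))
        = ∏ i, ∏ j, (β (Pi.single i 1) (Pi.single j 1)) ^ (x i * y j) := by
      refine Finset.prod_congr rfl fun i _ => ?_
      rw [mulhom_pi_expand (fun y => β (Pi.single i 1) y) (fun a b => hβ2 _ a b) y,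
        ← Finset.prod_zpow]
      refine Finset.prod_congr rfl fun j _ => ?_
      rw [← zpow_mul, mul_comm (y j) (x i)]
    rw [e1, e4, prod_pairs (fun i j => (β (Pi.single i 1) (Pi.single j 1)) ^ (x i * y j))
      (fun i => by
        show β (Pi.single i 1) (Pi.single i 1) ^ (x i * y i) = 1
        rw [hβdiag]; exact one_zpow _)]
    refine Finset.prod_congr rfl fun i _ => Finset.prod_congr rfl fun j _ => ?_
    rw [hβskew (Pi.single i 1) (Pi.single j 1), inv_zpow, sub_eq_add_neg, zpow_add, zpow_neg]
  set b : (Fin m → ℤ) → (Fin m → ℤ) → Circle := fun x y =>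
    ∏ i, ∏ j ∈ Finset.Ioi i,
      (csqrt (β (Pi.single i 1) (Pi.single j 1))) ^ (x i * y j - x j * y i) with hb
  have hb1 : ∀ x x' y, b (x + x') y = b x y * b x' y := by
    intro x x' y
    simp only [hb]
    rw [← Finset.prod_mul_distrib]
    refine Finset.prod_congr rfl fun i _ => ?_
    rw [← Finset.prod_mul_distrib]
    refine Finset.prod_congr rfl fun j _ => ?_
    rw [Pi.add_apply, Pi.add_apply, show (x i + x' i) * y j - (x j + x' j) * y i
      = (x i * y j - x j * y i) + (x' i * y j - x' j * y i) from by ring, zpow_add]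
  have hb2 : ∀ x y y', b x (y + y') = b x y * b x y' := by
    intro x y y'
    simp only [hb]
    rw [← Finset.prod_mul_distrib]
    refine Finset.prod_congr rfl fun i _ => ?_
    rw [← Finset.prod_mul_distrib]
    refine Finset.prod_congr rfl fun j _ => ?_
    rw [Pi.add_apply, Pi.add_apply, show x i * (y j + y' j) - x j * (y i + y' i)
      = (x i * y j - x j * y i) + (x i * y' j - x j * y' i) from by ring, zpow_add]
  have hbdiag : ∀ x, b x x = 1 := by
    intro x
    simp only [hb]
    refine Finset.prod_eq_one fun i _ => Finset.prod_eq_one fun j _ => ?_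
    rw [show x i * x j - x j * x i = 0 from by ring, zpow_zero]
  have hbskewrel : ∀ x y, b x y * (b y x)⁻¹ = β x y := by
    intro x y
    simp only [hb]
    rw [hexpand x y, ← Finset.prod_inv_distrib, ← Finset.prod_mul_distrib]
    refine Finset.prod_congr rfl fun i _ => ?_
    rw [← Finset.prod_inv_distrib, ← Finset.prod_mul_distrib]
    refine Finset.prod_congr rfl fun j _ => ?_
    rw [show y i * x j - y j * x i = -(x i * y j - x j * y i) from by ring, zpow_neg, inv_inv,
      ← mul_zpow, csqrt_mul_self]
  set σ : (Fin m → ℤ) → (Fin m → ℤ) → Circle :=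
    fun x y => ω x y * (ω 0 0)⁻¹ * (b x y)⁻¹ with hσ
  have hσcoc : ∀ x y z, σ x y * σ (x + y) z = σ y z * σ x (y + z) := by
    intro x y z
    have hbc : b x y * b (x + y) z = b y z * b x (y + z) := by
      rw [hb1 x y z, hb2 x y z]
      ext
      push_cast
      ring
    have hh := congrArg (fun z : Circle => (z : ℂ)) (hcoc x y z)
    have hbcC := congrArg (fun z : Circle => (z : ℂ)) hbc
    push_cast at hh hbcC
    simp only [hσ]
    ext
    push_cast
    field_simp
    linear_combination ((b y z : ℂ) * (b x (y + z) : ℂ)) * hh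
      - ((ω y z : ℂ) * (ω x (y + z) : ℂ)) * hbcC
  have hσsym : ∀ x y, σ x y = σ y x := by
    intro x y
    have h' := hbskewrel x y
    simp only [hβ] at h'
    have hC := congrArg (fun z : Circle => (z : ℂ)) h'
    push_cast at hC
    field_simp at hC
    simp only [hσ]
    ext
    push_cast
    field_simp
    linear_combination -hC
  have hσ0 : ∀ y, σ 0 y = 1 := by
    intro y
    have hb0 : b 0 y = 1 := by
      simp only [hb]
      refine Finset.prod_eq_one fun i _ => Finset.prod_eq_one fun j _ => ?_
      simp
    simp only [hσ]
    rw [hω0 y, hb0]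
    simp
  obtain ⟨e0, he0⟩ := sym_cocycle_coboundary m σ hσcoc hσsym hσ0
  refine ⟨b, fun x => e0 x * ω 0 0, hb1, hb2, hbdiag, ?_⟩
  intro x y
  have h := he0 x y
  simp only [hσ] at h
  have hC := congrArg (fun z : Circle => (z : ℂ)) h
  push_cast at hC
  ext
  push_cast
  field_simp at hC ⊢
  linear_combination hC
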